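/- Let n ≥ 2 be an integer and let r ∈ C²([0,∞)) satisfy r''(t)/(1 − r'(t)²) + ((n−1)/t)·r'(t) = 1 for all t ∈ (0,∞), with r(0) = 0, r'(0) = 0, 0 < r'(t) < 1 for all t ∈ (0,∞), and 0 < r''(t) ≤ 1 for all t ∈ [0,∞). Then √(n² + t²) − n ≤ r(t) ≤ t for all t ∈ [0,∞). -/

import Mathlib

open Set Filter Topology
open Real

lemma nonneg_aux {f f' : ℝ → ℝ} (hc : ContinuousOn f (Ici 0))
    (hd : ∀ t ∈ Ioi (0:ℝ), HasDerivWithinAt f (f' t) (Ioi 0) t)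
    (h0 : f 0 = 0) (hpos : ∀ t ∈ Ioi (0:ℝ), 0 ≤ f' t) :
    ∀ t ∈ Ici (0:ℝ), 0 ≤ f t := by
  have hm : MonotoneOn f (Ici 0) := by
    apply monotoneOn_of_hasDerivWithinAt_nonneg (convex_Ici 0) hc
    · rw [interior_Ici]; exact hd
    · rw [interior_Ici]; exact hpos
  intro t ht
  have := hm self_mem_Ici ht ht
  rwa [h0] at this

lemma artanh_deriv (x : ℝ) (hx : x ∈ Ioo (-1:ℝ) 1) :
    HasDerivAt (fun y => Real.log ((1+y)/(1-y)) / 2) (1/(1-x^2)) x := by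
  obtain ⟨h1, h2⟩ := hx
  have h1' : (0:ℝ) < 1 + x := by linarith
  have h2' : (0:ℝ) < 1 - x := by linarith
  have hg : HasDerivAt (fun y : ℝ => (1+y)/(1-y)) (2/(1-x)^2) x := by
    have ha : HasDerivAt (fun y : ℝ => 1+y) 1 x := (hasDerivAt_id x).const_add 1
    have hb : HasDerivAt (fun y : ℝ => 1-y) (-1) x := (hasDerivAt_id x).const_sub 1
    have := ha.div hb h2'.ne'
    refine this.congr_deriv ?_
    field_simp
    ring
  have hlog := (Real.hasDerivAt_log (by positivity : (1+x)/(1-x) ≠ 0)).comp x hg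
  have := hlog.div_const 2
  refine this.congr_deriv ?_
  have hne : (1:ℝ)-x^2 ≠ 0 := by nlinarith
  field_simp
  ring

lemma artanh_strictMono : StrictMonoOn (fun y => Real.log ((1+y)/(1-y)) / 2) (Ioo (-1:ℝ) 1) := by
  apply strictMonoOn_of_hasDerivWithinAt_pos (convex_Ioo (-1:ℝ) 1)
    (f' := fun x => 1/(1-x^2))
  · intro x hx
    exact (artanh_deriv x hx).continuousAt.continuousWithinAt
  · rw [interior_Ioo]
    intro x hx
    exact (artanh_deriv x hx).hasDerivWithinAt
  · rw [interior_Ioo]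
    intro x hx
    obtain ⟨h1, h2⟩ := hx
    have h3 : x^2 < 1 := by nlinarith
    have : (0:ℝ) < 1 - x^2 := by linarith
    positivity

-- key analytic inequality: sqrt(1+s^2) + s ≤ exp s for s ≥ 0, scaled
lemma sqrt_add_le_exp {s : ℝ} (hs : 0 ≤ s) : Real.sqrt (1 + s^2) + s ≤ Real.exp s := by
  have h1 : s ≤ Real.sinh s := by
    rcases eq_or_lt_of_le hs with h | h
    · simp [← h]
    · exact (Real.self_lt_sinh_iff.2 h).le
  have h2 : Real.sqrt (1 + s^2) ≤ Real.cosh s := by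
    have hc : 0 < Real.cosh s := Real.cosh_pos s
    have : 1 + s^2 ≤ (Real.cosh s)^2 := by
      rw [Real.cosh_sq]
      nlinarith
    calc Real.sqrt (1 + s^2) ≤ Real.sqrt ((Real.cosh s)^2) := Real.sqrt_le_sqrt this
      _ = Real.cosh s := Real.sqrt_sq hc.le
  calc Real.sqrt (1 + s^2) + s ≤ Real.cosh s + Real.sinh s := by linarith
    _ = Real.exp s := Real.cosh_add_sinh s

lemma key_ineq {N t : ℝ} (hN : 0 < N) (ht : 0 < t) :
    Real.log ((1 + t / Real.sqrt (N^2+t^2)) / (1 - t / Real.sqrt (N^2+t^2))) / 2 ≤ t / N := by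
  set S := Real.sqrt (N^2+t^2) with hSdef
  have hS2 : S^2 = N^2+t^2 := Real.sq_sqrt (by positivity)
  have hSpos : 0 < S := Real.sqrt_pos.2 (by positivity)
  have htS : t < S := by nlinarith
  have hd : (S+t)*(S-t) = N^2 := by nlinarith
  have h1m : (0:ℝ) < 1 - t/S := by
    rw [sub_pos]; exact (div_lt_one hSpos).2 htS
  have hx1 : (1 + t/S)/(1 - t/S) = ((S+t)/N)^2 := by
    rw [div_pow]
    rw [div_eq_div_iff h1m.ne' (by positivity : (N^2:ℝ) ≠ 0)]
    field_simp
    nlinarith [hd]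
  rw [hx1]
  have hy : (0:ℝ) < (S+t)/N := by positivity
  rw [show ((S+t)/N)^2 = ((S+t)/N)^(2:ℕ) by norm_num, Real.log_pow]
  have hgoal : Real.log ((S+t)/N) ≤ t/N := by
    rw [Real.log_le_iff_le_exp hy]
    have hs : 0 ≤ t/N := by positivity
    have h1 := sqrt_add_le_exp hs
    have h2 : S = N * Real.sqrt (1 + (t/N)^2) := by
      rw [hSdef, show N^2 + t^2 = N^2 * (1 + (t/N)^2) by field_simp,
        Real.sqrt_mul (by positivity), Real.sqrt_sq hN.le]
    rw [h2]
    have h3 : (N * Real.sqrt (1 + (t/N)^2) + t)/N = Real.sqrt (1 + (t/N)^2) + t/N := by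
      field_simp
    rw [h3]
    exact h1
  push_cast
  linarith
theorem stmt_4 (n : ℕ) (hn : 2 ≤ n) (r r' r'' : ℝ → ℝ)
    (hr' : ∀ t ∈ Set.Ici (0:ℝ), HasDerivWithinAt r (r' t) (Set.Ici 0) t)
    (hr'' : ∀ t ∈ Set.Ici (0:ℝ), HasDerivWithinAt r' (r'' t) (Set.Ici 0) t)
    (hcont : ContinuousOn r'' (Set.Ici 0))
    (heq : ∀ t ∈ Set.Ioi (0:ℝ),
      r'' t / (1 - (r' t) ^ 2) + ((n : ℝ) - 1) / t * r' t = 1)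
    (h0 : r 0 = 0) (h0' : r' 0 = 0)
    (hlt : ∀ t ∈ Set.Ioi (0:ℝ), 0 < r' t ∧ r' t < 1)
    (hconv : ∀ t ∈ Set.Ici (0:ℝ), 0 < r'' t ∧ r'' t ≤ 1) :
    ∀ t ∈ Set.Ici (0:ℝ),
      Real.sqrt ((n : ℝ) ^ 2 + t ^ 2) - n ≤ r t ∧ r t ≤ t := by
  have hnR : (2:ℝ) ≤ (n:ℝ) := by exact_mod_cast hn
  have hr'nonneg : ∀ u ∈ Ici (0:ℝ), 0 ≤ r' u := by
    intro u hu
    rcases eq_or_lt_of_le (mem_Ici.mp hu) with h | h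
    · rw [← h, h0']
    · exact (hlt u h).1.le
  have hr'lt1 : ∀ u ∈ Ici (0:ℝ), r' u < 1 := by
    intro u hu
    rcases eq_or_lt_of_le (mem_Ici.mp hu) with h | h
    · rw [← h, h0']; norm_num
    · exact (hlt u h).2
  have hden : ∀ u ∈ Ici (0:ℝ), (0:ℝ) < 1 - (r' u)^2 := by
    intro u hu
    have h1 := hr'nonneg u hu; have h2 := hr'lt1 u hu
    nlinarith
  set A : ℝ → ℝ := fun y => Real.log ((1+y)/(1-y)) / 2 with hAdef
  set φ : ℝ → ℝ := fun u => A (r' u) with hφdef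
  have hmem : ∀ u ∈ Ici (0:ℝ), r' u ∈ Ioo (-1:ℝ) 1 := fun u hu =>
    ⟨by linarith [hr'nonneg u hu], hr'lt1 u hu⟩
  have hφd : ∀ u ∈ Ici (0:ℝ), HasDerivWithinAt φ (1/(1-(r' u)^2) * r'' u) (Ici 0) u := by
    intro u hu
    exact (artanh_deriv (r' u) (hmem u hu)).comp_hasDerivWithinAt u (hr'' u hu)
  have hφcont : ContinuousOn φ (Ici 0) := fun u hu => (hφd u hu).continuousWithinAt
  have hφ0 : φ 0 = 0 := by simp [hφdef, hAdef, h0']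
  -- Step 2 : r' ≤ φ on Ici 0
  have hstep2 : ∀ u ∈ Ici (0:ℝ), r' u ≤ φ u := by
    have H := nonneg_aux (f := fun u => φ u - r' u)
      (f' := fun u => 1/(1-(r' u)^2) * r'' u - r'' u)
      (hφcont.sub (fun u hu => (hr'' u hu).continuousWithinAt))
      (fun u hu => (((hφd u (mem_Ici.mpr hu.le)).sub (hr'' u (mem_Ici.mpr hu.le))).mono Ioi_subset_Ici_self))
      (by simp [hφ0, h0'])
      (fun u hu => by
        have hd := hden u (mem_Ici.mpr hu.le)
        have hc := (hconv u (mem_Ici.mpr hu.le)).1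
        have h1 : 1 ≤ 1/(1-(r' u)^2) := by
          rw [le_div_iff₀ hd]; nlinarith [sq_nonneg (r' u)]
        nlinarith)
    intro u hu; have := sub_nonneg.mp (H u hu); linarith
  -- φ derivative on Ioi 0 via the ODE
  have hφIoi : ∀ u ∈ Ioi (0:ℝ), HasDerivWithinAt φ (1 - ((n:ℝ)-1)/u * r' u) (Ioi 0) u := by
    intro u hu
    have he : 1/(1-(r' u)^2) * r'' u = 1 - ((n:ℝ)-1)/u * r' u := by
      rw [one_div_mul_eq_div]
      linarith [heq u hu]
    exact he ▸ ((hφd u (mem_Ici.mpr hu.le)).mono Ioi_subset_Ici_self)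
  -- Step 3 : F := t^(n-1) φ - t^n/n is nonneg
  set F : ℝ → ℝ := fun u => u^(n-1) * φ u - u^n / n with hFdef
  have hFcont : ContinuousOn F (Ici 0) :=
    (((continuous_pow (n-1)).continuousOn.mul hφcont).sub
      ((continuous_pow n).continuousOn.div_const _))
  have hF0 : F 0 = 0 := by
    simp [hFdef, zero_pow (by omega : n - 1 ≠ 0), zero_pow (by omega : n ≠ 0)]
  have hFd : ∀ u ∈ Ioi (0:ℝ),
      HasDerivWithinAt F (((n:ℝ)-1) * u^(n-2) * (φ u - r' u)) (Ioi 0) u := by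
    intro u hu
    have hu0 : (0:ℝ) < u := hu
    have h1 : HasDerivWithinAt (fun x => x^(n-1) * φ x)
        (((n-1:ℕ):ℝ) * u^(n-1-1) * φ u + u^(n-1) * (1 - ((n:ℝ)-1)/u * r' u)) (Ioi 0) u :=
      ((hasDerivAt_pow (n-1) u).hasDerivWithinAt).mul (hφIoi u hu)
    have h2 : HasDerivWithinAt (fun x : ℝ => x^n / (n:ℝ)) (u^(n-1)) (Ioi 0) u := by
      have h : HasDerivWithinAt (fun x:ℝ => x^n) ((n:ℝ) * u^(n-1)) (Ioi 0) u :=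
        (hasDerivAt_pow n u).hasDerivWithinAt
      refine (h.div_const (n:ℝ)).congr_deriv ?_
      have hn0 : (n:ℝ) ≠ 0 := by positivity
      field_simp
    have h3 := h1.sub h2
    refine h3.congr_deriv ?_
    have hc : ((n-1:ℕ):ℝ) = (n:ℝ) - 1 := by
      rw [Nat.cast_sub (by omega : 1 ≤ n)]; norm_num
    have he1 : n - 1 - 1 = n - 2 := by omega
    have he2 : n - 1 = (n-2) + 1 := by omega
    rw [hc, he1, he2, pow_succ]
    field_simp
    ring
  have hFnn := nonneg_aux hFcont hFd hF0 (fun u hu => by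
    have hs := hstep2 u (mem_Ici.mpr hu.le)
    have hu0 : (0:ℝ) < u := hu
    have h2 : (0:ℝ) ≤ u^(n-2) := pow_nonneg hu0.le _
    have h3 : (0:ℝ) ≤ (n:ℝ)-1 := by linarith
    exact mul_nonneg (mul_nonneg h3 h2) (by linarith))
  -- φ u ≥ u/n
  have hφlb : ∀ u ∈ Ici (0:ℝ), u / n ≤ φ u := by
    intro u hu
    rcases eq_or_lt_of_le (mem_Ici.mp hu) with h | h
    · rw [← h, hφ0]; norm_num
    · have hF := hFnn u hu
      have hp : (0:ℝ) < u^(n-1) := pow_pos h _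
      have hun : u^n = u^(n-1) * u := by rw [← pow_succ]; congr 1; omega
      have hkey : u^(n-1) * (u/n) ≤ u^(n-1) * φ u := by
        have : F u = u^(n-1) * φ u - u^(n-1) * u / n := by rw [hFdef]; simp only []; rw [hun]
        rw [this] at hF
        have : u^(n-1) * (u/n) = u^(n-1) * u / n := by ring
        linarith [this]
      exact le_of_mul_le_mul_left hkey hp
  -- Step 4 : r' u ≥ u / sqrt(n²+u²)
  have hr'lb : ∀ u ∈ Ici (0:ℝ), u / Real.sqrt ((n:ℝ)^2 + u^2) ≤ r' u := by
    intro u hu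
    rcases eq_or_lt_of_le (mem_Ici.mp hu) with h | h
    · rw [← h, h0']; norm_num
    · have hS2 : (Real.sqrt ((n:ℝ)^2+u^2))^2 = (n:ℝ)^2+u^2 := Real.sq_sqrt (by positivity)
      have hSpos : 0 < Real.sqrt ((n:ℝ)^2+u^2) := Real.sqrt_pos.2 (by positivity)
      have huS : u < Real.sqrt ((n:ℝ)^2+u^2) := by nlinarith
      have hx0 : u/Real.sqrt ((n:ℝ)^2+u^2) ∈ Ioo (-1:ℝ) 1 := by
        constructor
        · have : (0:ℝ) ≤ u/Real.sqrt ((n:ℝ)^2+u^2) := div_nonneg h.le hSpos.le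
          linarith
        · exact (div_lt_one hSpos).2 huS
      have hkey := key_ineq (N := (n:ℝ)) (t := u) (by linarith) h
      by_contra hcon
      push_neg at hcon
      have hmono := artanh_strictMono (hmem u hu) hx0 hcon
      have hφu := hφlb u hu
      have : A (u/Real.sqrt ((n:ℝ)^2+u^2)) ≤ u / n := hkey
      have hAA : φ u = A (r' u) := rfl
      rw [hAA] at hφu
      exact absurd (lt_of_le_of_lt hφu (lt_of_lt_of_le hmono this)) (lt_irrefl _)
  -- derivative of sqrt(n²+t²)
  have hsqrtd : ∀ u ∈ Ici (0:ℝ), HasDerivWithinAt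
      (fun x => Real.sqrt ((n:ℝ)^2 + x^2)) (u / Real.sqrt ((n:ℝ)^2+u^2)) (Ici 0) u := by
    intro u _
    have hg : HasDerivAt (fun x : ℝ => (n:ℝ)^2 + x^2) (2*u) u := by
      simpa using ((hasDerivAt_pow 2 u).const_add ((n:ℝ)^2))
    have hne : (n:ℝ)^2 + u^2 ≠ 0 := by positivity
    have hcomp := (Real.hasDerivAt_sqrt hne).comp u hg
    have hSpos : 0 < Real.sqrt ((n:ℝ)^2+u^2) := Real.sqrt_pos.2 (by positivity)
    have : (1 / (2 * Real.sqrt ((n:ℝ)^2+u^2))) * (2*u) = u / Real.sqrt ((n:ℝ)^2+u^2) := by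
      field_simp
    exact (this ▸ hcomp).hasDerivWithinAt
  -- lower bound
  have hlow := nonneg_aux (f := fun u => r u - (Real.sqrt ((n:ℝ)^2+u^2) - n))
    (f' := fun u => r' u - u / Real.sqrt ((n:ℝ)^2+u^2))
    (fun u hu => ((hr' u hu).sub ((hsqrtd u hu).sub_const (n:ℝ))).continuousWithinAt)
    (fun u hu => (((hr' u (mem_Ici.mpr hu.le)).sub ((hsqrtd u (mem_Ici.mpr hu.le)).sub_const (n:ℝ))).mono Ioi_subset_Ici_self))
    (by
      simp only [h0]
      rw [show (n:ℝ)^2 + 0^2 = (n:ℝ)^2 by ring, Real.sqrt_sq (by linarith : (0:ℝ) ≤ (n:ℝ))]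
      ring)
    (fun u hu => by show (0:ℝ) ≤ r' u - u / Real.sqrt ((n:ℝ)^2+u^2); linarith [hr'lb u (mem_Ici.mpr hu.le)])
  -- upper bound
  have hupp := nonneg_aux (f := fun u => u - r u) (f' := fun u => 1 - r' u)
    (fun u hu => (continuousWithinAt_id.sub (hr' u hu).continuousWithinAt))
    (fun u hu => ((hasDerivWithinAt_id u _).sub ((hr' u (mem_Ici.mpr hu.le)).mono Ioi_subset_Ici_self)))
    (by simp [h0])
    (fun u hu => by show (0:ℝ) ≤ 1 - r' u; linarith [(hlt u hu).2])
  intro t ht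
  have h1 : 0 ≤ r t - (Real.sqrt ((n:ℝ)^2+t^2) - n) := hlow t ht
  have h2 : 0 ≤ t - r t := hupp t ht
  constructor <;> linarith
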